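/- Assume n > 0 and let r = k(d−1) + n·d(d−1)/2 − (d−1). If μ = (p_1, …, p_r) is an r-marking on the curve Γ satisfying property (*), then for every permutation τ of {1, …, r} the r-marking τ(μ) = (p_{τ(1)}, …, p_{τ(r)}) is equivalent to μ under D-moves and T-moves. -/

import Mathlib

namespace SeveriMarkings

/-- Components of the curve Γ: `L_1, …, L_d` (left) and `F_1, …, F_k` (right). -/
abbrev Comp (d k : ℕ) := Sum (Fin d) (Fin k)

/-- Nodes (edges of the multigraph `G(n,d,k)`): `n` edges between `L_i` and `L_j` for `i < j`,
and one edge between each `L_i` and each `F_j`. -/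
abbrev Node (n d k : ℕ) :=
  Sum (({p : Fin d × Fin d // p.1 < p.2}) × Fin n) (Fin d × Fin k)

/-- The two endpoints of a node. -/
def ends {n d k : ℕ} : Node n d k → Comp d k × Comp d k
  | Sum.inl e => (Sum.inl e.1.1.1, Sum.inl e.1.1.2)
  | Sum.inr e => (Sum.inl e.1, Sum.inr e.2)

/-- `joins e C C'` means the node `e` lies in `C ∩ C'`. -/
def joins {n d k : ℕ} (e : Node n d k) (C C' : Comp d k) : Prop :=
  ends e = (C, C') ∨ ends e = (C', C)

/-- `touches e C` means the node `e` is incident to the component `C`. -/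
def touches {n d k : ℕ} (e : Node n d k) (C : Comp d k) : Prop :=
  (ends e).1 = C ∨ (ends e).2 = C

/-- The simple graph on the components obtained after deleting a set `E` of edges:
two components are adjacent if some remaining edge joins them. Its connectivity is
equivalent to connectivity of the multigraph obtained from `G(n,d,k)` by deleting `E`. -/
def remGraph (n d k : ℕ) (E : Set (Node n d k)) : SimpleGraph (Comp d k) :=
  SimpleGraph.fromRel (fun u v => ∃ e, e ∉ E ∧ ends e = (u, v))

/-- A marking `μ` (an injective tuple of nodes) is irreducible if deleting its entries
from `G(n,d,k)` leaves a connected (multi)graph. -/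
def IsIrreducible {n d k r : ℕ} (μ : Fin r → Node n d k) : Prop :=
  (remGraph n d k (Set.range μ)).Connected

/-- The intersection number `C.C'`: the number of edges between `C` and `C'`. -/
noncomputable def interNum (n d k : ℕ) (C C' : Comp d k) : ℕ :=
  Nat.card {e : Node n d k // joins e C C'}

/-- `μ_{C,C'}`: the number of entries of `μ` lying in `C ∩ C'`. -/
noncomputable def markCount {n d k r : ℕ} (μ : Fin r → Node n d k) (C C' : Comp d k) : ℕ :=
  Nat.card {i : Fin r // joins (μ i) C C'}

/-- `μ_C`: the number of entries of `μ` incident to `C`. -/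
noncomputable def compCount {n d k r : ℕ} (μ : Fin r → Node n d k) (C : Comp d k) : ℕ :=
  Nat.card {i : Fin r // touches (μ i) C}

/-- A single D-move. -/
def DMove {n d k r : ℕ} (μ μ' : Fin r → Node n d k) : Prop :=
  ∃ (D D' : Comp d k) (q q' : Node n d k),
    D ≠ D' ∧ q ≠ q' ∧ joins q D D' ∧ joins q' D D' ∧
    ( (q ∉ Set.range μ ∧ ∃ i, μ i = q' ∧ μ' = Function.update μ i q)
    ∨ (q' ∉ Set.range μ ∧ ∃ i, μ i = q ∧ μ' = Function.update μ i q')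
    ∨ (∃ i j, μ i = q ∧ μ j = q' ∧ μ' = μ ∘ Equiv.swap i j)
    ∨ (q ∉ Set.range μ ∧ q' ∉ Set.range μ ∧ μ' = μ) )

/-- A single T-move. -/
def TMove {n d k r : ℕ} (μ μ' : Fin r → Node n d k) : Prop :=
  ∃ (D D' D'' : Comp d k) (q q' q'' : Node n d k),
    D ≠ D' ∧ D ≠ D'' ∧ D' ≠ D'' ∧
    joins q D' D'' ∧ joins q' D D'' ∧ joins q'' D D' ∧
    ( (q' ∈ Set.range μ ∧ μ' = μ)
    ∨ (q' ∉ Set.range μ ∧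
        ( (q'' ∉ Set.range μ ∧ ∃ i, μ i = q ∧ μ' = Function.update μ i q'')
        ∨ (q ∉ Set.range μ ∧ ∃ i, μ i = q'' ∧ μ' = Function.update μ i q)
        ∨ (∃ i j, μ i = q ∧ μ j = q'' ∧ μ' = μ ∘ Equiv.swap i j)
        ∨ (q ∉ Set.range μ ∧ q'' ∉ Set.range μ ∧ μ' = μ))) )

/-- Equivalence of markings: a finite sequence of D-moves and T-moves. -/
def MarkEquiv {n d k r : ℕ} (μ μ' : Fin r → Node n d k) : Prop :=
  Relation.ReflTransGen (fun a b => DMove a b ∨ TMove a b) μ μ'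

/-- Property (*) relative to the distinguished component `Ld`. -/
def PropertyStar {n d k r : ℕ} (Ld : Comp d k) (μ : Fin r → Node n d k) : Prop :=
  ∀ C C' : Comp d k, C ≠ C' →
    markCount μ C C' =
      if Ld = C ∨ Ld = C' then interNum n d k C C' - 1 else interNum n d k C C'

section Aux

open Function Relation

variable {n d k : ℕ}

lemma joins_comm {e : Node n d k} {C C' : Comp d k} (h : joins e C C') : joins e C' C :=
  Or.symm h

lemma ends_fst_ne_snd (e : Node n d k) : (ends e).1 ≠ (ends e).2 := by
  rcases e with ⟨⟨⟨a, b⟩, hab⟩, t⟩ | ⟨a, f⟩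
  · simpa [ends] using Fin.ne_of_lt hab
  · simp [ends]

lemma joins_ne {e : Node n d k} {C C' : Comp d k} (h : joins e C C') : C ≠ C' := by
  rcases h with h | h
  · have := ends_fst_ne_snd e
    rw [h] at this
    exact this
  · have := ends_fst_ne_snd e
    rw [h] at this
    exact this.symm

lemma joins_pair {e : Node n d k} {A B C D : Comp d k}
    (h1 : joins e A B) (h2 : joins e C D) : (A = C ∧ B = D) ∨ (A = D ∧ B = C) := by
  rcases h1 with h1 | h1 <;> rcases h2 with h2 | h2 <;>
    rw [h1, Prod.mk.injEq] at h2
  · exact Or.inl ⟨h2.1, h2.2⟩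
  · exact Or.inr ⟨h2.1, h2.2⟩
  · exact Or.inr ⟨h2.2, h2.1⟩
  · exact Or.inl ⟨h2.2, h2.1⟩

lemma ne_of_joins {u w : Node n d k} {A B L : Comp d k}
    (hu : joins u A L) (hw : joins w B L) (hAB : A ≠ B) (hAL : A ≠ L) : u ≠ w := by
  rintro rfl
  rcases joins_pair hu hw with ⟨h1, _⟩ | ⟨h1, _⟩
  · exact hAB h1
  · exact hAL h1

lemma interNum_pos {C C' : Comp d k} (h : ∃ e : Node n d k, joins e C C') :
    0 < interNum n d k C C' := by
  obtain ⟨e, he⟩ := h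
  have : Nonempty {e : Node n d k // joins e C C'} := ⟨⟨e, he⟩⟩
  exact Nat.card_pos

lemma exists_marked_of_pos {r : ℕ} {ν : Fin r → Node n d k} {C C' : Comp d k}
    (h : 0 < markCount ν C C') : ∃ i, joins (ν i) C C' := by
  by_contra hc
  push_neg at hc
  have : IsEmpty {i : Fin r // joins (ν i) C C'} := ⟨fun x => hc x.1 x.2⟩
  rw [markCount, Nat.card_of_isEmpty] at h
  omega

lemma exists_unmarked_of_lt {r : ℕ} {ν : Fin r → Node n d k} {C C' : Comp d k}
    (h : markCount ν C C' < interNum n d k C C') :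
    ∃ u, joins u C C' ∧ u ∉ Set.range ν := by
  by_contra hc
  push_neg at hc
  have key : interNum n d k C C' ≤ markCount ν C C' := by
    have hf : Function.Injective
        (fun e : {e : Node n d k // joins e C C'} =>
          (⟨(hc e.1 e.2).choose, by rw [(hc e.1 e.2).choose_spec]; exact e.2⟩ :
            {i : Fin r // joins (ν i) C C'})) := by
      intro e1 e2 hee
      have h1 := (hc e1.1 e1.2).choose_spec
      have h2 := (hc e2.1 e2.2).choose_spec
      apply Subtype.ext
      rw [← h1, ← h2]
      exact congrArg ν (congrArg Subtype.val hee)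
    exact Nat.card_le_card_of_injective _ hf
  omega

/-- The distinguished component `L_d`. -/
def LD (hd : 0 < d) : Comp d k := Sum.inl ⟨d - 1, by omega⟩

lemma exists_node_to_LD (hn : 0 < n) (hd : 0 < d) {C : Comp d k} (hC : C ≠ LD hd) :
    ∃ e : Node n d k, joins e C (LD hd) := by
  cases C with
  | inl a =>
    have ha : (a : ℕ) < d - 1 := by
      have h2 := a.2
      rcases Nat.lt_or_ge (a : ℕ) (d - 1) with h | h
      · exact h
      · exfalso
        apply hC
        have : (a : ℕ) = d - 1 := by omega
        simp [LD, Fin.ext_iff, this]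
    exact ⟨Sum.inl ⟨⟨(a, ⟨d - 1, by omega⟩), by simpa [Fin.lt_def] using ha⟩, ⟨0, hn⟩⟩,
      Or.inl rfl⟩
  | inr f => exact ⟨Sum.inr (⟨d - 1, by omega⟩, f), Or.inr rfl⟩

lemma exists_node_ll (hn : 0 < n) {a b : Fin d} (hab : a ≠ b) :
    ∃ e : Node n d k, joins e (Sum.inl a) (Sum.inl b) := by
  rcases lt_or_gt_of_ne hab with h | h
  · exact ⟨Sum.inl ⟨⟨(a, b), h⟩, ⟨0, hn⟩⟩, Or.inl rfl⟩
  · exact ⟨Sum.inl ⟨⟨(b, a), h⟩, ⟨0, hn⟩⟩, Or.inr rfl⟩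

lemma exists_unmarked (hn : 0 < n) (hd : 0 < d) {r : ℕ} {ν : Fin r → Node n d k}
    (hs : PropertyStar (LD hd) ν) {C : Comp d k} (hC : C ≠ LD hd) :
    ∃ u, joins u C (LD hd) ∧ u ∉ Set.range ν := by
  have hpos := interNum_pos (exists_node_to_LD hn hd hC)
  have hms := hs C (LD hd) hC
  rw [if_pos (Or.inr rfl)] at hms
  exact exists_unmarked_of_lt (by omega)

lemma exists_marked (hn : 0 < n) (hd : 0 < d) {r : ℕ} {ν : Fin r → Node n d k}
    (hs : PropertyStar (LD hd) ν) {A B : Comp d k}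
    (hA : LD hd ≠ A) (hB : LD hd ≠ B) (hAB : A ≠ B)
    (hw : ∃ e : Node n d k, joins e A B) : ∃ i, joins (ν i) A B := by
  have hms := hs A B hAB
  rw [if_neg (by tauto)] at hms
  exact exists_marked_of_pos (by rw [hms]; exact interNum_pos hw)

lemma not_marked_fiber (hd : 0 < d) {r : ℕ} {ν : Fin r → Node n d k}
    (hs : PropertyStar (LD hd) ν) (i : Fin r) (f : Fin k) :
    ¬ joins (ν i) (LD hd) (Sum.inr f) := by
  intro h
  have hne : (LD hd : Comp d k) ≠ Sum.inr f := by simp [LD]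
  have hms := hs _ _ hne
  rw [if_pos (Or.inl rfl)] at hms
  have hsub : Subsingleton {e : Node n d k // joins e (LD hd) (Sum.inr f)} := by
    constructor
    have key : ∀ e : Node n d k, joins e (LD hd) (Sum.inr f) →
        e = Sum.inr (⟨d - 1, by omega⟩, f) := by
      rintro (⟨⟨⟨a, b⟩, hab⟩, t⟩ | ⟨a, g⟩) (h | h)
      · simp [ends, Prod.ext_iff] at h
      · simp [ends, Prod.ext_iff] at h
      · simp only [ends, LD, Prod.mk.injEq, Sum.inl.injEq, Sum.inr.injEq] at h
        rw [h.1, h.2]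
      · simp [ends, Prod.ext_iff] at h
    rintro ⟨e1, h1⟩ ⟨e2, h2⟩
    exact Subtype.ext ((key _ h1).trans (key _ h2).symm)
  have h1 : interNum n d k (LD hd) (Sum.inr f) ≤ 1 := by
    rw [interNum]
    exact Finite.card_le_one_iff_subsingleton.mpr hsub
  have h2 : 0 < markCount ν (LD hd) (Sum.inr f) := by
    have : Nonempty {i : Fin r // joins (ν i) (LD hd) (Sum.inr f)} := ⟨⟨i, h⟩⟩
    exact Nat.card_pos
  omega

lemma markCount_comp {r : ℕ} (ν : Fin r → Node n d k) (σ : Equiv.Perm (Fin r))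
    (C C' : Comp d k) : markCount (ν ∘ σ) C C' = markCount ν C C' :=
  Nat.card_congr (Equiv.subtypeEquiv σ fun _ => Iff.rfl)

lemma star_comp {r : ℕ} {ν : Fin r → Node n d k} {L : Comp d k}
    (hs : PropertyStar L ν) (σ : Equiv.Perm (Fin r)) : PropertyStar L (ν ∘ σ) :=
  fun C C' h => by rw [markCount_comp]; exact hs C C' h

lemma range_comp_perm {r : ℕ} (ν : Fin r → Node n d k) (σ : Equiv.Perm (Fin r)) :
    Set.range (ν ∘ σ) = Set.range ν := by
  rw [Set.range_comp, Equiv.range_eq_univ, Set.image_univ]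

lemma not_mem_range_update {r : ℕ} {ν : Fin r → Node n d k} {i : Fin r}
    {u w : Node n d k} (hw : w ∉ Set.range ν) (hwu : w ≠ u) :
    w ∉ Set.range (Function.update ν i u) := by
  rintro ⟨x, hx⟩
  by_cases hxi : x = i
  · subst hxi
    rw [Function.update_self] at hx
    exact hwu hx.symm
  · rw [Function.update_of_ne hxi] at hx
    exact hw ⟨x, hx⟩

lemma dmove_swap {r : ℕ} {ν : Fin r → Node n d k} {i j : Fin r} {C C' : Comp d k}
    (hpq : ν i ≠ ν j) (hp : joins (ν i) C C') (hq : joins (ν j) C C') :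
    DMove ν (ν ∘ Equiv.swap i j) :=
  ⟨C, C', ν i, ν j, joins_ne hp, hpq, hp, hq,
    Or.inr (Or.inr (Or.inl ⟨i, j, rfl, rfl, rfl⟩))⟩

lemma tmove_swap {r : ℕ} {ν : Fin r → Node n d k} {i j : Fin r} {X Y Z : Comp d k}
    {u : Node n d k} (hp : joins (ν i) X Y) (hq : joins (ν j) X Z) (hYZ : Y ≠ Z)
    (hu : joins u Y Z) (hur : u ∉ Set.range ν) : TMove ν (ν ∘ Equiv.swap i j) :=
  ⟨Z, X, Y, ν i, u, ν j, (joins_ne hq).symm, hYZ.symm, joins_ne hp, hp,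
    joins_comm hu, joins_comm hq,
    Or.inr ⟨hur, Or.inr (Or.inr (Or.inl ⟨i, j, rfl, rfl, rfl⟩))⟩⟩

lemma tmove_replace {r : ℕ} {ν : Fin r → Node n d k} {i : Fin r} {X Y L : Comp d k}
    {u w : Node n d k} (hp : joins (ν i) X Y) (hu : joins u X L) (hw : joins w Y L)
    (hur : u ∉ Set.range ν) (hwr : w ∉ Set.range ν) (hXL : X ≠ L) (hYL : Y ≠ L) :
    TMove ν (Function.update ν i u) :=
  ⟨L, X, Y, ν i, w, u, hXL.symm, hYL.symm, joins_ne hp, hp,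
    joins_comm hw, joins_comm hu,
    Or.inr ⟨hwr, Or.inl ⟨hur, i, rfl, rfl⟩⟩⟩

lemma tmove_replace_back {r : ℕ} {ν : Fin r → Node n d k} {i : Fin r} {X Y L : Comp d k}
    {p u w : Node n d k} (hi : ν i = u) (hpr : p ∉ Set.range ν) (hp : joins p X Y)
    (hu : joins u X L) (hw : joins w Y L) (hwr : w ∉ Set.range ν)
    (hXL : X ≠ L) (hYL : Y ≠ L) : TMove ν (Function.update ν i p) :=
  ⟨L, X, Y, p, w, u, hXL.symm, hYL.symm, joins_ne hp, hp,
    joins_comm hw, joins_comm hu,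
    Or.inr ⟨hwr, Or.inr (Or.inl ⟨hpr, i, hi, rfl⟩)⟩⟩

lemma triple_swap {α β : Type*} [DecidableEq α] (ν : α → β) {i j i' : α}
    (hij : i ≠ j) (hii' : i ≠ i') (hji' : j ≠ i') :
    ((ν ∘ ⇑(Equiv.swap i i')) ∘ ⇑(Equiv.swap i j)) ∘ ⇑(Equiv.swap i' j)
      = ν ∘ ⇑(Equiv.swap i j) := by
  funext x
  simp only [Function.comp_apply, Equiv.swap_apply_def]
  split_ifs <;> simp_all

lemma update_swap_update {α β : Type*} [DecidableEq α] (ν : α → β) {i j : α} (u : β)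
    (hij : i ≠ j) :
    Function.update ((Function.update ν i u) ∘ ⇑(Equiv.swap i j)) j (ν i)
      = ν ∘ ⇑(Equiv.swap i j) := by
  funext x
  by_cases hx : x = j
  · subst hx
    rw [Function.update_self]
    simp only [Function.comp_apply, Equiv.swap_apply_right]
  · rw [Function.update_of_ne hx]
    simp only [Function.comp_apply]
    by_cases hxi : x = i
    · subst hxi
      rw [Equiv.swap_apply_left, Function.update_of_ne hij.symm]
    · rw [Equiv.swap_apply_of_ne_of_ne hxi hx, Function.update_of_ne hxi]

end Aux

section Main

open Function Relation

variable {n d k : ℕ}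

lemma swap_of_share (hn : 0 < n) (hd : 0 < d) {r : ℕ} {ν : Fin r → Node n d k}
    (hinj : Function.Injective ν) (hs : PropertyStar (LD hd) ν) {i j : Fin r} (hij : i ≠ j)
    {X Y Z : Comp d k} (hp : joins (ν i) X Y) (hq : joins (ν j) X Z) :
    MarkEquiv ν (ν ∘ Equiv.swap i j) := by
  by_cases hYZ : Y = Z
  · subst hYZ
    exact ReflTransGen.single (Or.inl (dmove_swap (fun h => hij (hinj h)) hp hq))
  by_cases hY : Y = LD hd
  · have hZ : Z ≠ LD hd := fun h => hYZ (hY.trans h.symm)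
    obtain ⟨u, hu, hur⟩ := exists_unmarked hn hd hs hZ
    exact ReflTransGen.single (Or.inr (tmove_swap hp hq hYZ
      (by rw [hY]; exact joins_comm hu) hur))
  by_cases hZ : Z = LD hd
  · obtain ⟨u, hu, hur⟩ := exists_unmarked hn hd hs hY
    exact ReflTransGen.single (Or.inr (tmove_swap hp hq hYZ
      (by rw [hZ]; exact hu) hur))
  by_cases hX : X = LD hd
  · -- shared component is LD itself
    rw [hX] at hp hq
    obtain ⟨a, rfl⟩ : ∃ a, Y = Sum.inl a := by
      cases Y with
      | inl a => exact ⟨a, rfl⟩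
      | inr f => exact absurd hp (not_marked_fiber hd hs i f)
    obtain ⟨b, rfl⟩ : ∃ b, Z = Sum.inl b := by
      cases Z with
      | inl b => exact ⟨b, rfl⟩
      | inr f => exact absurd hq (not_marked_fiber hd hs j f)
    have hab : a ≠ b := fun h => hYZ (by rw [h])
    obtain ⟨i', hm⟩ := exists_marked hn hd hs (Ne.symm hY) (Ne.symm hZ)
      (fun h => hab (Sum.inl.inj h)) (exists_node_ll hn hab)
    have hii' : i ≠ i' := by
      rintro rfl
      rcases joins_pair hp hm with ⟨h1, _⟩ | ⟨h1, _⟩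
      · exact hY h1.symm
      · exact hZ h1.symm
    have hji' : j ≠ i' := by
      rintro rfl
      rcases joins_pair hq hm with ⟨h1, _⟩ | ⟨h1, _⟩
      · exact hY h1.symm
      · exact hZ h1.symm
    obtain ⟨w1, hw1, hw1r⟩ := exists_unmarked hn hd hs hY
    obtain ⟨w2, hw2, hw2r⟩ := exists_unmarked hn hd hs hZ
    have s1 : TMove ν (ν ∘ Equiv.swap i i') :=
      tmove_swap (joins_comm hp) hm (Ne.symm hZ) (joins_comm hw2) hw2r
    set ν1 : Fin r → Node n d k := ν ∘ ⇑(Equiv.swap i i') with hν1def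
    have hν1i : ν1 i = ν i' := by
      simp only [hν1def, Function.comp_apply, Equiv.swap_apply_left]
    have hν1i' : ν1 i' = ν i := by
      simp only [hν1def, Function.comp_apply, Equiv.swap_apply_right]
    have hν1j : ν1 j = ν j := by
      simp only [hν1def, Function.comp_apply,
        Equiv.swap_apply_of_ne_of_ne hij.symm hji']
    have hrange1 : Set.range ν1 = Set.range ν := range_comp_perm ν _
    have s2 : TMove ν1 (ν1 ∘ Equiv.swap i j) :=
      tmove_swap (by rw [hν1i]; exact joins_comm hm) (by rw [hν1j]; exact joins_comm hq)
        hY hw1 (by rw [hrange1]; exact hw1r)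
    set ν2 : Fin r → Node n d k := ν1 ∘ ⇑(Equiv.swap i j) with hν2def
    have hν2i' : ν2 i' = ν i := by
      simp only [hν2def, Function.comp_apply,
        Equiv.swap_apply_of_ne_of_ne hii'.symm hji'.symm]
      exact hν1i'
    have hν2j : ν2 j = ν i' := by
      simp only [hν2def, Function.comp_apply, Equiv.swap_apply_right]
      exact hν1i
    have hrange2 : Set.range ν2 = Set.range ν := by
      rw [hν2def, range_comp_perm, hrange1]
    have s3 : TMove ν2 (ν2 ∘ Equiv.swap i' j) :=
      tmove_swap (by rw [hν2i']; exact joins_comm hp) (by rw [hν2j]; exact hm)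
        (Ne.symm hZ) (joins_comm hw2) (by rw [hrange2]; exact hw2r)
    have hfinal : ν2 ∘ ⇑(Equiv.swap i' j) = ν ∘ ⇑(Equiv.swap i j) :=
      triple_swap ν hij hii' hji'
    refine ReflTransGen.trans (ReflTransGen.single (Or.inr s1))
      (ReflTransGen.trans (ReflTransGen.single (Or.inr s2)) ?_)
    rw [← hfinal]
    exact ReflTransGen.single (Or.inr s3)
  · -- X, Y, Z all different from LD
    have hXY : X ≠ Y := joins_ne hp
    have hXZ : X ≠ Z := joins_ne hq
    obtain ⟨u, hu, hur⟩ := exists_unmarked hn hd hs hX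
    obtain ⟨w1, hw1, hw1r⟩ := exists_unmarked hn hd hs hY
    obtain ⟨w2, hw2, hw2r⟩ := exists_unmarked hn hd hs hZ
    have huw2 : w2 ≠ u := ne_of_joins hw2 hu (fun h => hXZ h.symm) hZ
    have huw1 : w1 ≠ u := ne_of_joins hw1 hu (fun h => hXY h.symm) hY
    have s1 : TMove ν (Function.update ν i u) :=
      tmove_replace hp hu hw1 hur hw1r hX hY
    set ν1 : Fin r → Node n d k := Function.update ν i u with hν1def
    have hν1i : ν1 i = u := Function.update_self i u ν
    have hν1j : ν1 j = ν j := Function.update_of_ne hij.symm u ν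
    have hw2r1 : w2 ∉ Set.range ν1 := not_mem_range_update hw2r huw2
    have s2 : TMove ν1 (ν1 ∘ Equiv.swap i j) :=
      tmove_swap (by rw [hν1i]; exact hu) (by rw [hν1j]; exact hq)
        (fun h => hZ h.symm) (joins_comm hw2) hw2r1
    set ν2 : Fin r → Node n d k := ν1 ∘ ⇑(Equiv.swap i j) with hν2def
    have hν2j : ν2 j = u := by
      simp only [hν2def, Function.comp_apply, Equiv.swap_apply_right]
      exact hν1i
    have hpr : ν i ∉ Set.range ν2 := by
      rintro ⟨x, hx⟩
      simp only [hν2def, Function.comp_apply] at hx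
      by_cases hy : Equiv.swap i j x = i
      · rw [hy, hν1i] at hx
        exact hur ⟨i, hx.symm⟩
      · rw [hν1def, Function.update_of_ne hy] at hx
        exact hy (hinj hx)
    have hw1r2 : w1 ∉ Set.range ν2 := by
      have : Set.range ν2 = Set.range ν1 := range_comp_perm ν1 _
      rw [this]
      exact not_mem_range_update hw1r huw1
    have s3 : TMove ν2 (Function.update ν2 j (ν i)) :=
      tmove_replace_back hν2j hpr hp hu hw1 hw1r2 hX hY
    have hfinal : Function.update ν2 j (ν i) = ν ∘ ⇑(Equiv.swap i j) :=
      update_swap_update ν u hij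
    refine ReflTransGen.trans (ReflTransGen.single (Or.inr s1))
      (ReflTransGen.trans (ReflTransGen.single (Or.inr s2)) ?_)
    rw [← hfinal]
    exact ReflTransGen.single (Or.inr s3)

lemma marked_fst (hd : 0 < d) {r : ℕ} {ν : Fin r → Node n d k}
    (hs : PropertyStar (LD hd) ν) (i : Fin r) :
    ∃ (a : Fin d) (W : Comp d k), joins (ν i) (Sum.inl a) W ∧
      (Sum.inl a : Comp d k) ≠ LD hd := by
  rcases hni : ν i with ⟨⟨⟨a, b⟩, hab⟩, t⟩ | ⟨a, f⟩
  · refine ⟨a, Sum.inl b, ?_, ?_⟩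
    · exact Or.inl rfl
    · intro h
      have h1 : (a : ℕ) = d - 1 := by
        have := Sum.inl.inj h
        simpa [Fin.ext_iff] using this
      have h2 := b.2
      have h3 : (a : ℕ) < (b : ℕ) := hab
      omega
  · refine ⟨a, Sum.inr f, ?_, ?_⟩
    · exact Or.inl rfl
    · intro h
      apply not_marked_fiber hd hs i f
      rw [← h, hni]
      exact Or.inl rfl

lemma swap_equiv (hn : 0 < n) (hd : 0 < d) {r : ℕ} {ν : Fin r → Node n d k}
    (hinj : Function.Injective ν) (hs : PropertyStar (LD hd) ν) (i j : Fin r) :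
    MarkEquiv ν (ν ∘ Equiv.swap i j) := by
  by_cases hij : i = j
  · subst hij
    have : ν ∘ ⇑(Equiv.swap i i) = ν := by
      funext x
      simp [Equiv.swap_self]
    rw [this]
    exact ReflTransGen.refl
  by_cases hsh : ∃ (X Y Z : Comp d k), joins (ν i) X Y ∧ joins (ν j) X Z
  · obtain ⟨X, Y, Z, hp, hq⟩ := hsh
    exact swap_of_share hn hd hinj hs hij hp hq
  · obtain ⟨a, B, hpa, haL⟩ := marked_fst hd hs i
    obtain ⟨c, D, hqc, hcL⟩ := marked_fst hd hs j
    have hac : (Sum.inl a : Comp d k) ≠ Sum.inl c := by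
      intro h
      exact hsh ⟨Sum.inl a, B, D, hpa, by rw [h]; exact hqc⟩
    have hac' : a ≠ c := fun h => hac (by rw [h])
    obtain ⟨i', hm⟩ := exists_marked hn hd hs (Ne.symm haL) (Ne.symm hcL) hac
      (exists_node_ll hn hac')
    have hii' : i ≠ i' := by
      rintro rfl
      exact hsh ⟨Sum.inl c, Sum.inl a, D, joins_comm hm, hqc⟩
    have hji' : j ≠ i' := by
      rintro rfl
      exact hsh ⟨Sum.inl a, B, Sum.inl c, hpa, hm⟩
    have e1 : MarkEquiv ν (ν ∘ Equiv.swap i i') :=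
      swap_of_share hn hd hinj hs hii' hpa hm
    set ν1 : Fin r → Node n d k := ν ∘ ⇑(Equiv.swap i i') with hν1def
    have hinj1 : Function.Injective ν1 := hinj.comp (Equiv.injective _)
    have hs1 : PropertyStar (LD hd) ν1 := star_comp hs _
    have hν1i : ν1 i = ν i' := by
      simp only [hν1def, Function.comp_apply, Equiv.swap_apply_left]
    have hν1i' : ν1 i' = ν i := by
      simp only [hν1def, Function.comp_apply, Equiv.swap_apply_right]
    have hν1j : ν1 j = ν j := by
      simp only [hν1def, Function.comp_apply,
        Equiv.swap_apply_of_ne_of_ne (Ne.symm hij) hji']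
    have e2 : MarkEquiv ν1 (ν1 ∘ Equiv.swap i j) :=
      swap_of_share hn hd hinj1 hs1 hij (X := Sum.inl c)
        (by rw [hν1i]; exact joins_comm hm) (by rw [hν1j]; exact hqc)
    set ν2 : Fin r → Node n d k := ν1 ∘ ⇑(Equiv.swap i j) with hν2def
    have hinj2 : Function.Injective ν2 := hinj1.comp (Equiv.injective _)
    have hs2 : PropertyStar (LD hd) ν2 := star_comp hs1 _
    have hν2i' : ν2 i' = ν i := by
      simp only [hν2def, Function.comp_apply,
        Equiv.swap_apply_of_ne_of_ne hii'.symm hji'.symm]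
      exact hν1i'
    have hν2j : ν2 j = ν i' := by
      simp only [hν2def, Function.comp_apply, Equiv.swap_apply_right]
      exact hν1i
    have e3 : MarkEquiv ν2 (ν2 ∘ Equiv.swap i' j) :=
      swap_of_share hn hd hinj2 hs2 (fun h => hji' h.symm) (X := Sum.inl a)
        (by rw [hν2i']; exact hpa) (by rw [hν2j]; exact hm)
    have hfinal : ν2 ∘ ⇑(Equiv.swap i' j) = ν ∘ ⇑(Equiv.swap i j) :=
      triple_swap ν hij hii' hji'
    exact e1.trans (e2.trans (hfinal ▸ e3))

end Main

/-- Assume `n > 0` and let `r = k(d−1) + n·d(d−1)/2 − (d−1)`. If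
`μ = (p_1, …, p_r)` is an `r`-marking on the curve `Γ` satisfying property (*), then for
every permutation `τ` of `{1, …, r}` the `r`-marking `τ(μ) = (p_{τ(1)}, …, p_{τ(r)})` is
equivalent to `μ` under D-moves and T-moves. -/
theorem stmt6 (n d k : ℕ) (hn : 0 < n) (hd : 0 < d)
    (μ : Fin (k * (d - 1) + n * (d * (d - 1) / 2) - (d - 1)) → Node n d k)
    (hμ : Function.Injective μ)
    (hs : PropertyStar (Sum.inl ⟨d - 1, by omega⟩) μ)
    (τ : Equiv.Perm (Fin (k * (d - 1) + n * (d * (d - 1) / 2) - (d - 1)))) :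
    MarkEquiv μ (μ ∘ τ) := by
  refine Equiv.Perm.swap_induction_on'
    (motive := fun σ => MarkEquiv μ (μ ∘ ⇑σ)) τ ?_ ?_
  · have h : μ ∘ ⇑(1 : Equiv.Perm (Fin (k * (d - 1) + n * (d * (d - 1) / 2) - (d - 1)))) = μ := by
      funext x; simp
    show MarkEquiv μ (μ ∘ ⇑(1 : Equiv.Perm (Fin (k * (d - 1) + n * (d * (d - 1) / 2) - (d - 1)))))
    rw [h]
    exact Relation.ReflTransGen.refl
  · intro f x y hxy hf
    have h2 := swap_equiv hn hd (hμ.comp f.injective) (star_comp hs f) x y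
    have h3 : (μ ∘ ⇑f) ∘ ⇑(Equiv.swap x y) = μ ∘ ⇑(f * Equiv.swap x y) := by
      funext z; simp [Equiv.Perm.mul_apply]
    show MarkEquiv μ (μ ∘ ⇑(f * Equiv.swap x y))
    exact Relation.ReflTransGen.trans hf (h3 ▸ h2)

end SeveriMarkings
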